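/- arXiv:1603.05676 — 3 statements merged into one kernel-verified Lean document; each statement's English description precedes it below -/
import Mathlib

section
/- A continuous baseleaf preserving map f : ℂ*_ℚ → ℂ*_ℚ factors through the baseleaf — i.e., there exists a continuous map g : ℂ*_ℚ → ℂ with f = ν ∘ g — if and only if deg(f) = 0. -/
open Complex Real Filter MeasureTheory

noncomputable section

/-- The profinite completion of `ℤ`: the inverse limit of the groups `ZMod n`
over the divisibility order. -/
def Zhat : Type :=
  {a : (n : ℕ+) → ZMod n //
    ∀ (n k : ℕ+), ZMod.castHom
        (show ((n : ℕ+) : ℕ) ∣ ((n * k : ℕ+) : ℕ) by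
          rw [PNat.mul_coe]; exact dvd_mul_right _ _)
        (ZMod n) (a (n * k)) = a n}

instance (n : ℕ) : TopologicalSpace (ZMod n) := ⊥

instance : TopologicalSpace Zhat := by unfold Zhat; infer_instance

instance : MeasurableSpace Zhat := borel _

instance : Zero Zhat := ⟨⟨fun _ => 0, fun _ _ => map_zero _⟩⟩

instance : Add Zhat :=
  ⟨fun a b => ⟨fun n => a.1 n + b.1 n, fun n k => by rw [map_add, a.2 n k, b.2 n k]⟩⟩

/-- The canonical inclusion `ℤ → ẑ`. -/
def iotaZ (k : ℤ) : Zhat := ⟨fun n => (k : ZMod n), fun n m => by rw [map_intCast]⟩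

/-- Multiplication by a natural number on `ẑ`. -/
def nsmulZ (c : ℕ) (a : Zhat) : Zhat :=
  ⟨fun n => (c : ZMod n) * a.1 n, fun n k => by rw [map_mul, map_natCast, a.2 n k]⟩

lemma exp_real_mul_I_norm (θ : ℝ) : ‖Complex.exp ((θ : ℂ) * Complex.I)‖ = 1 := by
  rw [Complex.norm_exp_ofReal_mul_I]

lemma exp_div_pow (θ : ℝ) (n k : ℕ+) :
    Complex.exp (((θ / (((n * k : ℕ+) : ℕ)) : ℝ) : ℂ) * Complex.I) ^ ((k : ℕ+) : ℕ)
      = Complex.exp (((θ / ((n : ℕ+) : ℕ) : ℝ) : ℂ) * Complex.I) := by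
  rw [← Complex.exp_nat_mul]
  congr 1
  have hn : (((n : ℕ+) : ℕ) : ℂ) ≠ 0 := by exact_mod_cast n.ne_zero
  have hk : (((k : ℕ+) : ℕ) : ℂ) ≠ 0 := by exact_mod_cast k.ne_zero
  rw [PNat.mul_coe]
  push_cast
  field_simp

lemma exp_div_powC (w : ℂ) (n k : ℕ+) :
    Complex.exp (w / (((n * k : ℕ+) : ℕ) : ℂ)) ^ ((k : ℕ+) : ℕ)
      = Complex.exp (w / (((n : ℕ+) : ℕ) : ℂ)) := by
  rw [← Complex.exp_nat_mul]
  congr 1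
  have hn : (((n : ℕ+) : ℕ) : ℂ) ≠ 0 := by exact_mod_cast n.ne_zero
  have hk : (((k : ℕ+) : ℕ) : ℂ) ≠ 0 := by exact_mod_cast k.ne_zero
  rw [PNat.mul_coe]
  push_cast
  field_simp

lemma exp_natCast_congr (n : ℕ+) (A B : ℕ)
    (h : (A : ZMod ((n : ℕ+) : ℕ)) = (B : ZMod ((n : ℕ+) : ℕ))) :
    Complex.exp (((2 * π * A / ((n : ℕ+) : ℕ) : ℝ) : ℂ) * Complex.I)
      = Complex.exp (((2 * π * B / ((n : ℕ+) : ℕ) : ℝ) : ℂ) * Complex.I) := by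
  rw [ZMod.natCast_eq_natCast_iff] at h
  obtain ⟨j, hj⟩ := Nat.modEq_iff_dvd.mp h
  have hn : ((((n : ℕ+) : ℕ) : ℝ)) ≠ 0 := by exact_mod_cast n.ne_zero
  have hB : (B : ℝ) = (A : ℝ) + (((n : ℕ+) : ℕ) : ℝ) * (j : ℝ) := by
    have : (B : ℤ) = (A : ℤ) + (((n : ℕ+) : ℕ) : ℤ) * j := by linarith [hj]
    exact_mod_cast congrArg (fun t : ℤ => (t : ℝ)) this
  have key : ((2 * π * B / ((n : ℕ+) : ℕ) : ℝ) : ℂ) * Complex.I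
      = ((2 * π * A / ((n : ℕ+) : ℕ) : ℝ) : ℂ) * Complex.I + (j : ℂ) * (2 * (π : ℂ) * Complex.I) := by
    have hnC : ((((n : ℕ+) : ℕ) : ℂ)) ≠ 0 := by exact_mod_cast n.ne_zero
    push_cast [hB]
    field_simp
  rw [key, Complex.exp_add, Complex.exp_int_mul_two_pi_mul_I, mul_one]

/-- The component at level `n` of the canonical map `ẑ → S¹_ℚ`,
`l ↦ e^{2πil/n}`. -/
def phiComp (a : Zhat) (n : ℕ+) : ℂ :=
  Complex.exp (((2 * π * ((a.1 n).val : ℕ) / ((n : ℕ+) : ℕ) : ℝ) : ℂ) * Complex.I)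

lemma phiComp_pow (a : Zhat) (n k : ℕ+) : phiComp a (n * k) ^ ((k : ℕ+) : ℕ) = phiComp a n := by
  unfold phiComp
  rw [exp_div_pow]
  haveI : NeZero (((n * k : ℕ+) : ℕ)) := ⟨(n * k).ne_zero⟩
  haveI : NeZero (((n : ℕ+) : ℕ)) := ⟨n.ne_zero⟩
  apply exp_natCast_congr
  have h := a.2 n k
  rw [ZMod.castHom_apply] at h
  rw [ZMod.natCast_val, ZMod.natCast_val, ZMod.cast_id, h]

/-- The adelic solenoid `S¹_ℚ`: the inverse limit of the circles
`S¹ = {z ∈ ℂ : ‖z‖ = 1}` under the covering maps `z ↦ z^{m/n}` for `n ∣ m`. -/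
def SolQ : Type :=
  {z : ℕ+ → ℂ // (∀ n, ‖z n‖ = 1) ∧ ∀ (n k : ℕ+), z (n * k) ^ ((k : ℕ+) : ℕ) = z n}

instance : TopologicalSpace SolQ := by unfold SolQ; infer_instance
instance : MeasurableSpace SolQ := borel _

instance : Mul SolQ :=
  ⟨fun x y => ⟨fun n => x.1 n * y.1 n,
    ⟨fun n => by rw [norm_mul, x.2.1 n, y.2.1 n, one_mul],
     fun n k => by rw [mul_pow, x.2.2 n k, y.2.2 n k]⟩⟩⟩

instance : One SolQ := ⟨⟨fun _ => 1, ⟨fun _ => norm_one, fun _ _ => one_pow _⟩⟩⟩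

/-- The canonical homomorphism `φ : ẑ → S¹_ℚ`, induced componentwise by
`l ↦ e^{2πil/n}`. -/
def phiS (a : Zhat) : SolQ :=
  ⟨fun n => phiComp a n, ⟨fun n => exp_real_mul_I_norm _, phiComp_pow a⟩⟩

/-- The baseleaf `ν : ℝ → S¹_ℚ`, `ν(t) = (e^{it/n})ₙ`. -/
def nuS (t : ℝ) : SolQ :=
  ⟨fun n => Complex.exp (((t / ((n : ℕ+) : ℕ) : ℝ) : ℂ) * Complex.I),
   ⟨fun n => exp_real_mul_I_norm _, fun n k => exp_div_pow t n k⟩⟩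

/-- `exp : ẑ × ℝ → S¹_ℚ`, `exp(a, θ) = φ(a)·ν(θ)`. -/
def expS (p : Zhat × ℝ) : SolQ := phiS p.1 * nuS p.2

/-- The algebraic solenoid `ℂ*_ℚ`: the inverse limit of copies of `ℂ* = ℂ \ {0}`
under the covering maps `z ↦ z^{m/n}` for `n ∣ m`. -/
def CSolQ : Type :=
  {z : ℕ+ → ℂ // (∀ n, z n ≠ 0) ∧ ∀ (n k : ℕ+), z (n * k) ^ ((k : ℕ+) : ℕ) = z n}

instance : TopologicalSpace CSolQ := by unfold CSolQ; infer_instance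
instance : MeasurableSpace CSolQ := borel _

instance : Mul CSolQ :=
  ⟨fun x y => ⟨fun n => x.1 n * y.1 n,
    ⟨fun n => mul_ne_zero (x.2.1 n) (y.2.1 n),
     fun n k => by rw [mul_pow, x.2.2 n k, y.2.2 n k]⟩⟩⟩

instance : One CSolQ := ⟨⟨fun _ => 1, ⟨fun _ => one_ne_zero, fun _ _ => one_pow _⟩⟩⟩

/-- The canonical homomorphism `φ : ẑ → ℂ*_ℚ`. -/
def phiC (a : Zhat) : CSolQ :=
  ⟨fun n => phiComp a n, ⟨fun n => Complex.exp_ne_zero _, phiComp_pow a⟩⟩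

/-- The baseleaf `ν : ℂ → ℂ*_ℚ`, `ν(z) = (e^{iz/n})ₙ`. -/
def nuC (z : ℂ) : CSolQ :=
  ⟨fun n => Complex.exp (Complex.I * z / (((n : ℕ+) : ℕ) : ℂ)),
   ⟨fun n => Complex.exp_ne_zero _, fun n k => exp_div_powC (Complex.I * z) n k⟩⟩

/-- `exp : ẑ × ℂ → ℂ*_ℚ`, `exp(a, z) = φ(a)·ν(z)`. -/
def expC (a : Zhat) (z : ℂ) : CSolQ := phiC a * nuC z

/-- The `n`-th power map on the Riemann sphere `Ĉ = ℂ ∪ {∞}`, with `∞ ↦ ∞`. -/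
def spherePow (k : ℕ) (x : OnePoint ℂ) : OnePoint ℂ :=
  Option.map (fun z : ℂ => z ^ k) x

/-- The adelic Riemann sphere `Ĉ_ℚ`: the inverse limit of Riemann spheres under
the branched covering maps `z ↦ z^{m/n}` for `n ∣ m`. -/
def SphereQ : Type :=
  {z : ℕ+ → OnePoint ℂ // ∀ (n k : ℕ+), spherePow ((k : ℕ+) : ℕ) (z (n * k)) = z n}

instance : TopologicalSpace SphereQ := by unfold SphereQ; infer_instance

/-- The leaf maps `exp(a, ·) : ℂ → ℂ*_ℚ ⊂ Ĉ_ℚ` of the adelic Riemann sphere. -/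
def expSph (a : Zhat) (z : ℂ) : SphereQ :=
  ⟨fun n => OnePoint.some (phiComp a n * Complex.exp (Complex.I * z / (((n : ℕ+) : ℕ) : ℂ))),
   fun n k => by
     show OnePoint.some ((phiComp a (n * k) * _) ^ ((k : ℕ+) : ℕ)) = _
     rw [mul_pow, phiComp_pow, exp_div_powC]⟩

/-- The renormalization operator `I_n` on functions on `ℂ*_ℚ`:
the average of `μ` over the fiber `π_n⁻¹(π_n(x))`, namely
`I_n(μ)(x) = ∫_{ẑ} μ(φ(n·a)·x) dη(a)`. -/
def Iren (η : Measure Zhat) (n : ℕ+) (f : CSolQ → ℂ) (x : CSolQ) : ℂ :=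
  ∫ a : Zhat, f (phiC (nsmulZ ((n : ℕ+) : ℕ) a) * x) ∂η

/-- The renormalization operator `I_n` on functions on `S¹_ℚ`. -/
def IrenS (η : Measure Zhat) (n : ℕ+) (f : SolQ → ℂ) (x : SolQ) : ℂ :=
  ∫ a : Zhat, f (phiS (nsmulZ ((n : ℕ+) : ℕ) a) * x) ∂η

/-- The character `χ_q = (π_n)^m : S¹_ℚ → S¹` associated to a rational `q = m/n`. -/
def chiQ (q : ℚ) (x : SolQ) : ℂ := (x.1 ⟨q.den, q.den_pos⟩) ^ q.num

/-- A function `f : ℝ → ℂ` is limit periodic if for every `ε > 0` there is a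
positive integer `N` such that `|f(x + 2πn) − f(x)| < ε` for all `x ∈ ℝ` and
all integers `n ∈ Nℤ`. -/
def LimitPeriodic (f : ℝ → ℂ) : Prop :=
  ∀ ε : ℝ, 0 < ε → ∃ N : ℕ+, ∀ x : ℝ, ∀ n : ℤ, ((N : ℕ+) : ℤ) ∣ n →
    ‖f (x + 2 * π * n) - f x‖ < ε

/-- A function `f : ℂ → ℂ` is limit periodic with respect to `x` if for every
`ε > 0` and compact `K ⊆ ℝ` there is a positive integer `N` with
`|f(z + 2πn) − f(z)| < ε` for all `z` with `Im z ∈ K` and all `n ∈ Nℤ`. -/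
def LimitPeriodicX (f : ℂ → ℂ) : Prop :=
  ∀ ε : ℝ, 0 < ε → ∀ K : Set ℝ, IsCompact K → ∃ N : ℕ+,
    ∀ z : ℂ, z.im ∈ K → ∀ n : ℤ, ((N : ℕ+) : ℤ) ∣ n →
      ‖f (z + 2 * π * n) - f z‖ < ε


namespace S12

instance (n : ℕ) : DiscreteTopology (ZMod n) := ⟨rfl⟩

lemma pnat_nz (n : ℕ+) : NeZero ((n : ℕ+) : ℕ) := ⟨n.ne_zero⟩

/-- congruence mod n implies equality of exponentials, integer version -/
lemma exp_intCast_congr (n : ℕ+) (A B : ℤ) (hd : ((n : ℕ+) : ℤ) ∣ A - B) :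
    Complex.exp (((2 * π * A / ((n : ℕ+) : ℕ) : ℝ) : ℂ) * Complex.I)
      = Complex.exp (((2 * π * B / ((n : ℕ+) : ℕ) : ℝ) : ℂ) * Complex.I) := by
  obtain ⟨j, hj⟩ := hd
  rw [Complex.exp_eq_exp_iff_exists_int]
  refine ⟨j, ?_⟩
  have hn : ((((n : ℕ+) : ℕ) : ℂ)) ≠ 0 := by exact_mod_cast n.ne_zero
  have hA : (A : ℂ) = (B : ℂ) + (((n : ℕ+) : ℕ) : ℂ) * (j : ℂ) := by
    have : A = B + (((n : ℕ+) : ℕ) : ℤ) * j := by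
      have : ((n : ℕ+) : ℤ) = (((n : ℕ+) : ℕ) : ℤ) := by norm_cast
      omega
    exact_mod_cast congrArg (fun t : ℤ => (t : ℂ)) this
  push_cast
  rw [hA]
  field_simp

/-- converse: equality of exponentials implies congruence -/
lemma exp_congr_intCast (n : ℕ+) (A B : ℤ)
    (h : Complex.exp (((2 * π * A / ((n : ℕ+) : ℕ) : ℝ) : ℂ) * Complex.I)
      = Complex.exp (((2 * π * B / ((n : ℕ+) : ℕ) : ℝ) : ℂ) * Complex.I)) :
    ((n : ℕ+) : ℤ) ∣ A - B := by
  rw [Complex.exp_eq_exp_iff_exists_int] at h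
  obtain ⟨j, hj⟩ := h
  have hn : (0:ℝ) < (((n : ℕ+) : ℕ) : ℝ) := by exact_mod_cast n.pos
  have h3 : (2 * π * A / ((n : ℕ+) : ℕ) : ℝ)
      = (2 * π * B / ((n : ℕ+) : ℕ) : ℝ) + (j:ℝ) * (2 * π) := by
    have := congrArg Complex.im hj
    simpa using this
  have h4 : (A : ℝ) = (B : ℝ) + (j:ℝ) * (((n : ℕ+) : ℕ) : ℝ) := by
    field_simp at h3
    nlinarith [Real.pi_pos, h3]
  have h5 : A = B + j * (((n : ℕ+) : ℕ) : ℤ) := by exact_mod_cast h4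
  refine ⟨j, ?_⟩
  have hnn : ((n : ℕ+) : ℤ) = (((n : ℕ+) : ℕ) : ℤ) := by norm_cast
  rw [hnn, h5]; ring

lemma exp_congr_natCast' (n : ℕ+) (A B : ℕ)
    (h : Complex.exp (((2 * π * A / ((n : ℕ+) : ℕ) : ℝ) : ℂ) * Complex.I)
      = Complex.exp (((2 * π * B / ((n : ℕ+) : ℕ) : ℝ) : ℂ) * Complex.I)) :
    (A : ZMod ((n : ℕ+) : ℕ)) = (B : ZMod ((n : ℕ+) : ℕ)) := by
  have := exp_congr_intCast n A B (by exact_mod_cast h)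
  have h0 : ((A - B : ℤ) : ZMod ((n : ℕ+) : ℕ)) = 0 := by
    rw [ZMod.intCast_zmod_eq_zero_iff_dvd]
    exact_mod_cast this
  push_cast at h0
  exact sub_eq_zero.mp h0

end S12
namespace S12

lemma continuous_nuC : Continuous nuC := by
  unfold nuC
  apply Continuous.subtype_mk
  apply continuous_pi
  intro n
  exact Complex.continuous_exp.comp (by continuity)

lemma nuC_injective : Function.Injective nuC := by
  intro z w hzw
  have h1 : ∀ n : ℕ+, Complex.exp (Complex.I * z / (((n : ℕ+) : ℕ) : ℂ))
      = Complex.exp (Complex.I * w / (((n : ℕ+) : ℕ) : ℂ)) := fun n =>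
    congrFun (congrArg Subtype.val hzw) n
  have h2 : ∀ n : ℕ+, ∃ k : ℤ, Complex.I * z / (((n : ℕ+) : ℕ) : ℂ)
      = Complex.I * w / (((n : ℕ+) : ℕ) : ℂ) + (k : ℂ) * (2 * (π:ℂ) * Complex.I) := by
    intro n
    exact Complex.exp_eq_exp_iff_exists_int.mp (h1 n)
  obtain ⟨k, hk⟩ := h2 1
  have hk' : Complex.I * z = Complex.I * w + (k:ℂ) * (2 * (π:ℂ) * Complex.I) := by
    simpa using hk
  have hzw1 : z = w + (k:ℂ) * (2*(π:ℂ)) := by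
    linear_combination (-Complex.I) * hk' + (z - w - (k:ℂ)*(2*(π:ℂ))) * Complex.I_sq
  -- now show k = 0 : every n divides k
  have hdvd : ∀ n : ℕ+, ((n : ℕ+) : ℤ) ∣ k := by
    intro n
    obtain ⟨j, hj⟩ := h2 n
    have hn : ((((n : ℕ+) : ℕ)) : ℂ) ≠ 0 := by exact_mod_cast n.ne_zero
    rw [hzw1] at hj
    have h2π : (2*(π:ℂ)*Complex.I) ≠ 0 := by
      simp [Complex.I_ne_zero, Real.pi_ne_zero, Complex.ofReal_ne_zero]
    have hkj : (k:ℂ) = (((n : ℕ+) : ℕ) : ℂ) * j := by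
      have h0 : ((k:ℂ) - (((n : ℕ+) : ℕ) : ℂ) * j) * (2*(π:ℂ)*Complex.I) = 0 := by
        have e : Complex.I * (w + (k:ℂ) * (2*(π:ℂ))) / (((n : ℕ+) : ℕ) : ℂ)
            - Complex.I * w / (((n : ℕ+) : ℕ) : ℂ)
            = (j : ℂ) * (2 * (π:ℂ) * Complex.I) := by linear_combination hj
        field_simp at e
        linear_combination Complex.I * e
      have := (mul_eq_zero.mp h0).resolve_right h2π
      linear_combination this
    have hfin : k = (((n : ℕ+) : ℕ) : ℤ) * j := by exact_mod_cast hkj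
    exact ⟨j, by exact_mod_cast hfin⟩
  have hk0 : k = 0 := by
    by_contra hne
    have h1 : ((k.natAbs + 1 : ℕ) : ℤ) ∣ k := by
      have := hdvd ⟨k.natAbs + 1, Nat.succ_pos _⟩
      exact_mod_cast this
    have h1' : ((k.natAbs + 1 : ℕ) : ℤ) ∣ |k| := (dvd_abs _ _).mpr h1
    have h3 := Int.le_of_dvd (abs_pos.mpr hne) h1'
    have h4 := Int.abs_eq_natAbs k
    omega
  rw [hzw1, hk0]; push_cast; ring

end S12
namespace S12

open Topology

/-- general compatibility of a `Zhat` element along divisibility -/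
lemma zhat_compat (a : Zhat) (d n : ℕ+) (hdvd : ((d : ℕ+) : ℕ) ∣ ((n : ℕ+) : ℕ)) :
    (((a.1 n).val : ℕ) : ZMod ((d : ℕ+) : ℕ)) = a.1 d := by
  haveI : NeZero ((n : ℕ+) : ℕ) := ⟨n.ne_zero⟩
  obtain ⟨k, hk⟩ := hdvd
  have hk0 : 0 < k := by
    rcases Nat.eq_zero_or_pos k with h | h
    · exfalso; rw [h, mul_zero] at hk; exact n.ne_zero hk
    · exact h
  let k' : ℕ+ := ⟨k, hk0⟩
  have hn : n = d * k' := by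
    apply PNat.coe_injective
    rw [PNat.mul_coe]
    exact hk
  subst hn
  have h2 := a.2 d k' 
  rw [ZMod.castHom_apply] at h2
  rw [ZMod.natCast_val, h2]

/-- `m!` as a positive natural -/
def pfact (m : ℕ) : ℕ+ := ⟨m.factorial, m.factorial_pos⟩

/-- the integer approximating `a ∈ ẑ` at level `m!` -/
def rz (a : Zhat) (m : ℕ) : ℤ := ((a.1 (pfact m)).val : ℤ)

lemma rz_mod (a : Zhat) (N : ℕ+) (m : ℕ) (hm : ((N : ℕ+) : ℕ) ≤ m) :
    ((rz a m : ℤ) : ZMod ((N : ℕ+) : ℕ)) = a.1 N := by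
  have hdvd : ((N : ℕ+) : ℕ) ∣ ((pfact m : ℕ+) : ℕ) :=
    Nat.dvd_factorial N.pos hm
  have := zhat_compat a N (pfact m) hdvd
  rw [← this]
  unfold rz
  push_cast
  ring

lemma rz_sub_dvd (a : Zhat) (N : ℕ+) (m m' : ℕ) (hm : ((N : ℕ+) : ℕ) ≤ m)
    (hm' : ((N : ℕ+) : ℕ) ≤ m') : ((N : ℕ+) : ℤ) ∣ rz a m - rz a m' := by
  have h1 := rz_mod a N m hm
  have h2 := rz_mod a N m' hm'
  have h0 : ((rz a m - rz a m' : ℤ) : ZMod ((N : ℕ+) : ℕ)) = 0 := by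
    push_cast
    rw [h1, h2]
    ring
  have := (ZMod.intCast_zmod_eq_zero_iff_dvd _ _).mp h0
  exact_mod_cast this

/-- the approximating sequence to the extension of `h` -/
def hseq (h : ℂ → ℂ) (a : Zhat) (z : ℂ) (m : ℕ) : ℂ :=
  h (z + 2 * π * ((rz a m : ℤ) : ℂ))

lemma im_add_int (z : ℂ) (k : ℤ) : (z + 2 * π * ((k : ℤ) : ℂ)).im = z.im := by
  simp

/-- uniform Cauchy-type estimate for `hseq` -/
lemma hseq_key (h : ℂ → ℂ) (hlp : LimitPeriodicX h) (K : Set ℝ) (hK : IsCompact K)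
    (ε : ℝ) (hε : 0 < ε) : ∃ M : ℕ, ∀ m, M ≤ m → ∀ m', M ≤ m' → ∀ a : Zhat, ∀ z : ℂ,
      z.im ∈ K → ‖hseq h a z m - hseq h a z m'‖ < ε := by
  obtain ⟨N, hN⟩ := hlp ε hε K hK
  refine ⟨((N : ℕ+) : ℕ), fun m hm m' hm' a z hz => ?_⟩
  have hdvd := rz_sub_dvd a N m m' hm hm'
  have harg : z + 2 * π * ((rz a m : ℤ) : ℂ)
      = (z + 2 * π * ((rz a m' : ℤ) : ℂ)) + 2 * π * ((rz a m - rz a m' : ℤ) : ℂ) := by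
    push_cast
    ring
  have him : (z + 2 * π * ((rz a m' : ℤ) : ℂ)).im ∈ K := by
    rw [im_add_int]; exact hz
  have := hN (z + 2 * π * ((rz a m' : ℤ) : ℂ)) him (rz a m - rz a m') hdvd
  unfold hseq
  rw [harg]
  exact this

lemma hseq_cauchy (h : ℂ → ℂ) (hlp : LimitPeriodicX h) (a : Zhat) (z : ℂ) :
    CauchySeq (hseq h a z) := by
  rw [Metric.cauchySeq_iff']
  intro ε hε
  obtain ⟨M, hM⟩ := hseq_key h hlp {z.im} isCompact_singleton ε hε
  exact ⟨M, fun m hm => by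
    rw [dist_eq_norm]
    exact hM m hm M le_rfl a z rfl⟩

/-- the extension `H` of `h` to `ẑ × ℂ` -/
def Hext (h : ℂ → ℂ) (a : Zhat) (z : ℂ) : ℂ := limUnder atTop (hseq h a z)

lemma Hext_tendsto (h : ℂ → ℂ) (hlp : LimitPeriodicX h) (a : Zhat) (z : ℂ) :
    Tendsto (hseq h a z) atTop (𝓝 (Hext h a z)) :=
  (hseq_cauchy h hlp a z).tendsto_limUnder

lemma Hext_iota (h : ℂ → ℂ) (hlp : LimitPeriodicX h) (k : ℤ) (z : ℂ) :
    Hext h (iotaZ k) z = h (z + 2 * π * (k : ℂ)) := by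
  refine tendsto_nhds_unique (Hext_tendsto h hlp (iotaZ k) z) ?_
  rw [Metric.tendsto_atTop]
  intro ε hε
  obtain ⟨N, hN⟩ := hlp ε hε {z.im} isCompact_singleton
  refine ⟨((N : ℕ+) : ℕ), fun m hm => ?_⟩
  have h1 : ((rz (iotaZ k) m : ℤ) : ZMod ((N : ℕ+) : ℕ)) = ((k : ℤ) : ZMod ((N : ℕ+) : ℕ)) :=
    rz_mod (iotaZ k) N m hm
  have hdvd : ((N : ℕ+) : ℤ) ∣ rz (iotaZ k) m - k := by
    have h0 : ((rz (iotaZ k) m - k : ℤ) : ZMod ((N : ℕ+) : ℕ)) = 0 := by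
      push_cast
      rw [h1]
      ring
    have := (ZMod.intCast_zmod_eq_zero_iff_dvd _ _).mp h0
    exact_mod_cast this
  have harg : z + 2 * π * ((rz (iotaZ k) m : ℤ) : ℂ)
      = (z + 2 * π * (k : ℂ)) + 2 * π * ((rz (iotaZ k) m - k : ℤ) : ℂ) := by
    push_cast; ring
  have him : (z + 2 * π * (k : ℂ)).im ∈ ({z.im} : Set ℝ) := by
    have : (z + 2 * π * (k : ℂ)).im = z.im := by simp
    simp [this]
  have := hN (z + 2 * π * (k : ℂ)) him (rz (iotaZ k) m - k) hdvd
  rw [dist_eq_norm]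
  unfold hseq
  rw [harg]
  exact this

end S12
namespace S12

open Topology

lemma continuous_rzC (m : ℕ) : Continuous (fun a : Zhat => ((rz a m : ℤ) : ℂ)) := by
  have h1 : Continuous (fun a : Zhat => a.1 (pfact m)) :=
    (continuous_apply (pfact m)).comp continuous_subtype_val
  have h2 : Continuous (fun c : ZMod ((pfact m : ℕ+) : ℕ) => ((c.val : ℤ) : ℂ)) :=
    continuous_of_discreteTopology
  exact h2.comp h1

lemma continuous_hseq (h : ℂ → ℂ) (hc : Continuous h) (m : ℕ) :
    Continuous (fun p : Zhat × ℂ => hseq h p.1 p.2 m) := by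
  unfold hseq
  apply hc.comp
  exact continuous_snd.add (continuous_const.mul ((continuous_rzC m).comp continuous_fst))

lemma Hext_continuous (h : ℂ → ℂ) (hc : Continuous h) (hlp : LimitPeriodicX h) :
    Continuous (fun p : Zhat × ℂ => Hext h p.1 p.2) := by
  have hloc : TendstoLocallyUniformly (fun m (p : Zhat × ℂ) => hseq h p.1 p.2 m)
      (fun p : Zhat × ℂ => Hext h p.1 p.2) atTop := by
    rw [Metric.tendstoLocallyUniformly_iff]
    intro ε hε p0
    have hε2 : 0 < ε / 2 := by linarith
    obtain ⟨M, hM⟩ := hseq_key h hlp (Metric.closedBall p0.2.im 1)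
      (isCompact_closedBall _ _) (ε/2) hε2
    refine ⟨(Set.univ : Set Zhat) ×ˢ (Complex.im ⁻¹' Metric.ball p0.2.im 1), ?_, ?_⟩
    · apply prod_mem_nhds Filter.univ_mem
      exact (Complex.continuous_im.continuousAt).preimage_mem_nhds
        (Metric.ball_mem_nhds _ one_pos)
    · filter_upwards [Filter.eventually_ge_atTop M] with m hm
      rintro ⟨a, z⟩ ⟨-, hz⟩
      have hzK : z.im ∈ Metric.closedBall p0.2.im 1 :=
        Metric.ball_subset_closedBall hz
      have hle : dist (Hext h a z) (hseq h a z m) ≤ ε / 2 := by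
        have htd : Tendsto (fun m' => dist (hseq h a z m') (hseq h a z m)) atTop
            (𝓝 (dist (Hext h a z) (hseq h a z m))) :=
          (Hext_tendsto h hlp a z).dist tendsto_const_nhds
        refine le_of_tendsto htd ?_
        filter_upwards [Filter.eventually_ge_atTop M] with m' hm'
        rw [dist_eq_norm]
        exact le_of_lt (hM m' hm' m hm a z hzK)
      calc dist (Hext h a z) (hseq h a z m) ≤ ε / 2 := hle
        _ < ε := by linarith
  exact hloc.continuous (Filter.Eventually.of_forall (continuous_hseq h hc)).frequently

lemma tendsto_iota_rz (a : Zhat) :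
    Tendsto (fun m => iotaZ (rz a m)) atTop (𝓝 a) := by
  refine tendsto_subtype_rng.mpr ?_
  rw [tendsto_pi_nhds]
  intro n
  apply Tendsto.congr' (f₁ := fun _ => a.1 n) _ tendsto_const_nhds
  filter_upwards [Filter.eventually_ge_atTop ((n : ℕ+) : ℕ)] with m hm
  exact (rz_mod a n m hm).symm

lemma continuous_expC_left (z : ℂ) : Continuous (fun a : Zhat => expC a z) := by
  unfold expC
  have h1 : Continuous (fun a : Zhat => phiC a) := by
    unfold phiC
    apply Continuous.subtype_mk
    apply continuous_pi
    intro n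
    show Continuous ((fun c : ZMod ((n : ℕ+) : ℕ) =>
      Complex.exp (((2 * π * (c.val : ℕ) / ((n : ℕ+) : ℕ) : ℝ) : ℂ) * Complex.I)) ∘
        (fun a : Zhat => a.1 n))
    have h1 : Continuous (fun a : Zhat => a.1 n) :=
      (continuous_apply n).comp continuous_subtype_val
    have h2 : Continuous (fun c : ZMod ((n : ℕ+) : ℕ) =>
        Complex.exp (((2 * π * (c.val : ℕ) / ((n : ℕ+) : ℕ) : ℝ) : ℂ) * Complex.I)) :=
      continuous_of_discreteTopology
    exact h2.comp h1
  show Continuous (fun a : Zhat => phiC a * nuC z)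
  apply Continuous.subtype_mk
  apply continuous_pi
  intro n
  show Continuous fun a : Zhat => (phiC a).1 n * (nuC z).1 n
  exact ((continuous_apply n).comp (continuous_subtype_val.comp h1)).mul continuous_const

/-- the baseleaf through integer translates: `expC (ι k) z = ν (z + 2πk)` -/
lemma expC_iota (k : ℤ) (z : ℂ) : expC (iotaZ k) z = nuC (z + 2 * π * (k : ℂ)) := by
  apply Subtype.ext
  funext n
  show phiComp (iotaZ k) n * Complex.exp (Complex.I * z / (((n : ℕ+) : ℕ) : ℂ))
    = Complex.exp (Complex.I * (z + 2 * π * (k:ℂ)) / (((n : ℕ+) : ℕ) : ℂ))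
  haveI : NeZero ((n : ℕ+) : ℕ) := ⟨n.ne_zero⟩
  set V : ℤ := (((k : ZMod ((n : ℕ+) : ℕ)).val : ℕ) : ℤ) with hV
  have hdvd : ((n : ℕ+) : ℤ) ∣ V - k := by
    have h0 : ((V - k : ℤ) : ZMod ((n : ℕ+) : ℕ)) = 0 := by
      have h1 : ((((k : ZMod ((n : ℕ+) : ℕ)).val : ℕ)) : ZMod ((n : ℕ+) : ℕ))
          = (k : ZMod ((n : ℕ+) : ℕ)) := by
        rw [ZMod.natCast_val, ZMod.cast_id]
      rw [hV]
      push_cast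
      rw [ZMod.natCast_val, ZMod.cast_id, sub_self]
    have := (ZMod.intCast_zmod_eq_zero_iff_dvd _ _).mp h0
    exact_mod_cast this
  obtain ⟨j, hj⟩ := hdvd
  have hjC : (V : ℂ) = (k : ℂ) + (((n : ℕ+) : ℕ) : ℂ) * j := by
    have hnn : ((n : ℕ+) : ℤ) = (((n : ℕ+) : ℕ) : ℤ) := by norm_cast
    have : V = k + (((n : ℕ+) : ℕ) : ℤ) * j := by rw [← hnn]; omega
    exact_mod_cast congrArg (fun t : ℤ => (t : ℂ)) this
  unfold phiComp
  rw [← Complex.exp_add, Complex.exp_eq_exp_iff_exists_int]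
  refine ⟨j, ?_⟩
  have hn : ((((n : ℕ+) : ℕ)) : ℂ) ≠ 0 := by exact_mod_cast n.ne_zero
  have hVval : (((iotaZ k).1 n).val : ℂ) = (V : ℂ) := by
    unfold iotaZ
    push_cast [hV]
    ring
  push_cast
  rw [show ((((iotaZ k).1 n).val : ℕ) : ℂ) = (V:ℂ) from by exact_mod_cast hVval, hjC]
  field_simp
  ring

end S12
namespace S12

open Topology

instance : T2Space CSolQ := by unfold CSolQ; infer_instance

/-- Key: with `deg = 0`, `f` maps leaves into the baseleaf, compatibly with `Hext`. -/
lemma f_expC (f : CSolQ → CSolQ) (hf : Continuous f) (h : ℂ → ℂ)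
    (hlp : LimitPeriodicX h) (hdec0 : ∀ z : ℂ, f (nuC z) = nuC (h z))
    (a : Zhat) (z : ℂ) : f (expC a z) = nuC (Hext h a z) := by
  have h1 : Tendsto (fun m => f (expC (iotaZ (rz a m)) z)) atTop (𝓝 (f (expC a z))) := by
    apply (hf.tendsto _).comp
    exact ((continuous_expC_left z).tendsto _).comp (tendsto_iota_rz a)
  have h2 : ∀ m, f (expC (iotaZ (rz a m)) z) = nuC (hseq h a z m) := by
    intro m
    rw [expC_iota, hdec0]
    rfl
  have h3 : Tendsto (fun m => nuC (hseq h a z m)) atTop (𝓝 (nuC (Hext h a z))) :=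
    (continuous_nuC.tendsto _).comp (Hext_tendsto h hlp a z)
  refine tendsto_nhds_unique ?_ h3
  exact h1.congr h2

/-- discrete logarithm for roots of unity -/
lemma exists_dlog (m : ℕ+) (u : ℂ) (hu : u ^ ((m : ℕ+) : ℕ) = 1) :
    ∃ c : ZMod ((m : ℕ+) : ℕ),
      u = Complex.exp (((2 * π * (c.val : ℕ) / ((m : ℕ+) : ℕ) : ℝ) : ℂ) * Complex.I) := by
  haveI : NeZero ((m : ℕ+) : ℕ) := ⟨m.ne_zero⟩
  obtain ⟨i, hi, hiu⟩ := (Complex.isPrimitiveRoot_exp ((m : ℕ+) : ℕ) m.ne_zero).eq_pow_of_pow_eq_one hu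
  refine ⟨(i : ZMod ((m : ℕ+) : ℕ)), ?_⟩
  have h1 : Complex.exp (2 * (π:ℂ) * Complex.I / ((m : ℕ+) : ℕ)) ^ i
      = Complex.exp (((2 * π * (i : ℕ) / ((m : ℕ+) : ℕ) : ℝ) : ℂ) * Complex.I) := by
    rw [← Complex.exp_nat_mul]
    congr 1
    push_cast
    ring
  rw [← hiu, h1]
  apply exp_natCast_congr
  rw [ZMod.natCast_val, ZMod.cast_id]

/-- the chosen discrete logarithm -/
def dlog (m : ℕ+) (u : ℂ) : ZMod ((m : ℕ+) : ℕ) :=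
  if hu : u ^ ((m : ℕ+) : ℕ) = 1 then Classical.choose (exists_dlog m u hu) else 0

lemma dlog_spec (m : ℕ+) (u : ℂ) (hu : u ^ ((m : ℕ+) : ℕ) = 1) :
    u = Complex.exp (((2 * π * ((dlog m u).val : ℕ) / ((m : ℕ+) : ℕ) : ℝ) : ℂ) * Complex.I) := by
  unfold dlog
  rw [dif_pos hu]
  exact Classical.choose_spec (exists_dlog m u hu)

/-- the complex coordinate of `x` seen from level `n` -/
def Zc (n : ℕ+) (x : CSolQ) : ℂ :=
  -Complex.I * (((n : ℕ+) : ℕ) : ℂ) * Complex.log (x.1 n)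

lemma exp_I_Zc (n : ℕ+) (x : CSolQ) : Complex.exp (Complex.I * Zc n x) = x.1 1 := by
  unfold Zc
  have h1 : Complex.I * (-Complex.I * (((n : ℕ+) : ℕ) : ℂ) * Complex.log (x.1 n))
      = (((n : ℕ+) : ℕ) : ℂ) * Complex.log (x.1 n) := by
    have := Complex.I_sq
    linear_combination (-((((n : ℕ+) : ℕ) : ℂ)) * Complex.log (x.1 n)) * Complex.I_sq
  rw [h1]
  have h2 : Complex.exp ((((n : ℕ+) : ℕ) : ℂ) * Complex.log (x.1 n))
      = Complex.exp (Complex.log (x.1 n)) ^ ((n : ℕ+) : ℕ) := by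
    rw [← Complex.exp_nat_mul]
  rw [h2, Complex.exp_log (x.2.1 n)]
  have h3 := x.2.2 1 n
  have : (1 * n : ℕ+) = n := one_mul n
  rw [this] at h3
  exact h3

/-- the root-of-unity discrepancy of `x` at level `m` -/
def uc (n m : ℕ+) (x : CSolQ) : ℂ :=
  x.1 m * Complex.exp (-(Complex.I * Zc n x / (((m : ℕ+) : ℕ) : ℂ)))

lemma uc_pow (n m : ℕ+) (x : CSolQ) : (uc n m x) ^ ((m : ℕ+) : ℕ) = 1 := by
  unfold uc
  rw [mul_pow, ← Complex.exp_nat_mul]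
  have hm : ((((m : ℕ+) : ℕ)) : ℂ) ≠ 0 := by exact_mod_cast m.ne_zero
  have h1 : (((m : ℕ+) : ℕ) : ℂ) * -(Complex.I * Zc n x / (((m : ℕ+) : ℕ) : ℂ))
      = -(Complex.I * Zc n x) := by field_simp
  rw [h1]
  have h3 := x.2.2 1 m
  have he : (1 * m : ℕ+) = m := one_mul m
  rw [he] at h3
  rw [h3]
  rw [Complex.exp_neg, exp_I_Zc]
  exact mul_inv_cancel₀ (x.2.1 1)

/-- the `ẑ`-coordinate of `x` seen from level `n` -/
def Ac (n : ℕ+) (x : CSolQ) : Zhat :=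
  ⟨fun m => dlog m (uc n m x), by
    intro m k
    have h1 := dlog_spec (m * k) (uc n (m * k) x) (uc_pow n (m * k) x)
    have h2 := dlog_spec m (uc n m x) (uc_pow n m x)
    -- (uc n (m*k) x)^k = uc n m x
    have h3 : (uc n (m * k) x) ^ ((k : ℕ+) : ℕ) = uc n m x := by
      unfold uc
      rw [mul_pow, ← Complex.exp_nat_mul]
      have h4 := x.2.2 m k
      rw [h4]
      congr 1
      have hm : ((((m : ℕ+) : ℕ)) : ℂ) ≠ 0 := by exact_mod_cast m.ne_zero
      have hk : ((((k : ℕ+) : ℕ)) : ℂ) ≠ 0 := by exact_mod_cast k.ne_zero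
      rw [PNat.mul_coe]
      congr 1
      push_cast
      field_simp
    rw [h1] at h3
    have h5 : Complex.exp (((2 * π * (((dlog (m * k) (uc n (m * k) x)).val : ℕ))
        / ((m : ℕ+) : ℕ) : ℝ) : ℂ) * Complex.I) = uc n m x := by
      rw [← exp_div_pow (2 * π * (((dlog (m * k) (uc n (m * k) x)).val : ℕ))) m k]
      exact h3
    rw [h2] at h5
    have h6 := exp_congr_natCast' m _ _ h5
    haveI : NeZero ((m : ℕ+) : ℕ) := ⟨m.ne_zero⟩
    haveI : NeZero (((m * k : ℕ+) : ℕ)) := ⟨(m * k).ne_zero⟩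
    rw [ZMod.natCast_val, ZMod.natCast_val, ZMod.cast_id] at h6
    rw [ZMod.castHom_apply]
    exact h6⟩

/-- the coordinates reconstruct `x` -/
lemma expC_Ac_Zc (n : ℕ+) (x : CSolQ) : expC (Ac n x) (Zc n x) = x := by
  apply Subtype.ext
  funext m
  show phiComp (Ac n x) m * Complex.exp (Complex.I * Zc n x / (((m : ℕ+) : ℕ) : ℂ)) = x.1 m
  have h1 : phiComp (Ac n x) m = uc n m x := (dlog_spec m (uc n m x) (uc_pow n m x)).symm
  rw [h1]
  unfold uc
  rw [mul_assoc, ← Complex.exp_add, neg_add_cancel, Complex.exp_zero, mul_one]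

end S12
namespace S12

open Topology

lemma continuousAt_proj (n : ℕ+) (x0 : CSolQ) : ContinuousAt (fun x : CSolQ => x.1 n) x0 :=
  ((continuous_apply n).comp continuous_subtype_val).continuousAt

lemma continuousAt_Zc (n : ℕ+) (x0 : CSolQ) (hslit : x0.1 n ∈ Complex.slitPlane) :
    ContinuousAt (Zc n) x0 := by
  unfold Zc
  exact continuousAt_const.mul ((continuousAt_proj n x0).clog hslit)

lemma continuousAt_uc (n m : ℕ+) (x0 : CSolQ) (hslit : x0.1 n ∈ Complex.slitPlane) :
    ContinuousAt (uc n m) x0 := by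
  unfold uc
  apply ContinuousAt.mul (continuousAt_proj m x0)
  apply Complex.continuous_exp.continuousAt.comp
  exact (((continuousAt_const.mul (continuousAt_Zc n x0 hslit)).div_const _)).neg

lemma roots_finite (m : ℕ+) : {w : ℂ | w ^ ((m : ℕ+) : ℕ) = 1}.Finite := by
  have hne : (Polynomial.X ^ ((m : ℕ+) : ℕ) - Polynomial.C 1 : Polynomial ℂ) ≠ 0 := by
    intro hC
    have h0 := Polynomial.natDegree_X_pow_sub_C (n := ((m : ℕ+) : ℕ)) (r := (1:ℂ))
    rw [hC] at h0
    simp at h0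
    exact m.ne_zero h0.symm
  have := Polynomial.finite_setOf_isRoot hne
  convert this using 1
  ext w
  simp [Polynomial.IsRoot, sub_eq_zero]

lemma eventually_uc_const (n m : ℕ+) (x0 : CSolQ) (hslit : x0.1 n ∈ Complex.slitPlane) :
    ∀ᶠ x in 𝓝 x0, uc n m x = uc n m x0 := by
  have hfin : ({w : ℂ | w ^ ((m : ℕ+) : ℕ) = 1} \ {uc n m x0}).Finite :=
    (roots_finite m).diff
  have hcl : IsClosed ({w : ℂ | w ^ ((m : ℕ+) : ℕ) = 1} \ {uc n m x0}) := hfin.isClosed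
  have hmem : ({w : ℂ | w ^ ((m : ℕ+) : ℕ) = 1} \ {uc n m x0})ᶜ ∈ 𝓝 (uc n m x0) := by
    apply hcl.isOpen_compl.mem_nhds
    simp
  have hev := (continuousAt_uc n m x0 hslit).eventually_mem hmem
  filter_upwards [hev] with x hx
  have hroot : uc n m x ∈ {w : ℂ | w ^ ((m : ℕ+) : ℕ) = 1} := uc_pow n m x
  by_contra hne
  exact hx ⟨hroot, hne⟩

lemma continuousAt_Ac (n : ℕ+) (x0 : CSolQ) (hslit : x0.1 n ∈ Complex.slitPlane) :
    ContinuousAt (Ac n) x0 := by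
  show Tendsto (Ac n) (𝓝 x0) (𝓝 (Ac n x0))
  refine tendsto_subtype_rng.mpr ?_
  rw [tendsto_pi_nhds]
  intro m
  apply Tendsto.congr' (f₁ := fun _ => (Ac n x0).1 m) _ tendsto_const_nhds
  filter_upwards [eventually_uc_const n m x0 hslit] with x hx
  show (Ac n x0).1 m = (Ac n x).1 m
  show dlog m (uc n m x0) = dlog m (uc n m x)
  rw [hx]

lemma exists_slit (x : CSolQ) : ∃ n : ℕ+, x.1 n ∈ Complex.slitPlane := by
  by_cases h1 : x.1 1 ∈ Complex.slitPlane
  · exact ⟨1, h1⟩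
  · refine ⟨2, ?_⟩
    rw [Complex.mem_slitPlane_iff] at h1 ⊢
    push_neg at h1
    obtain ⟨hre, him⟩ := h1
    right
    intro him2
    have hsq : (x.1 2) ^ 2 = x.1 1 := by
      have h3 := x.2.2 1 2
      have he : (1 * 2 : ℕ+) = 2 := one_mul 2
      rw [he] at h3
      exact h3
    have hre1 : (x.1 1).re = (x.1 2).re ^ 2 := by
      rw [← hsq, pow_two, pow_two, Complex.mul_re, him2]
      ring
    have : (x.1 2).re = 0 := by nlinarith [sq_nonneg ((x.1 2).re)]
    have : x.1 2 = 0 := Complex.ext (by simpa using this) (by simpa using him2)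
    exact x.2.1 2 this

end S12

namespace S12

open Topology

set_option maxHeartbeats 1000000 in
lemma continuousAt_Hext_comp (h : ℂ → ℂ) (hc : Continuous h) (hlp : LimitPeriodicX h)
    (n : ℕ+) (x0 : CSolQ) (hslit : x0.1 n ∈ Complex.slitPlane) :
    ContinuousAt (fun x => Hext h (Ac n x) (Zc n x)) x0 := by
  show ContinuousAt ((fun p : Zhat × ℂ => Hext h p.1 p.2) ∘ fun x => (Ac n x, Zc n x)) x0
  exact ((Hext_continuous h hc hlp).continuousAt).comp
    ((continuousAt_Ac n x0 hslit).prodMk (continuousAt_Zc n x0 hslit))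

set_option maxHeartbeats 1000000 in
lemma Hext_coord_indep (f : CSolQ → CSolQ) (hf : Continuous f) (h : ℂ → ℂ)
    (hlp : LimitPeriodicX h) (hdec0 : ∀ z : ℂ, f (nuC z) = nuC (h z))
    (n n' : ℕ+) (x : CSolQ) :
    Hext h (Ac n x) (Zc n x) = Hext h (Ac n' x) (Zc n' x) := by
  apply nuC_injective
  rw [← f_expC f hf h hlp hdec0 (Ac n x) (Zc n x),
    ← f_expC f hf h hlp hdec0 (Ac n' x) (Zc n' x),
    expC_Ac_Zc, expC_Ac_Zc]

end S12
/-- A continuous baseleaf preserving map `f : ℂ*_ℚ → ℂ*_ℚ`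
(with degree `q` witnessed by its decomposition `f(ν z) = ν(qz + h z)`) factors
through the baseleaf — there is a continuous `g : ℂ*_ℚ → ℂ` with `f = ν ∘ g` —
iff `deg f = 0`. -/
theorem statement12 (f : CSolQ → CSolQ) (hf : Continuous f)
    (q : ℚ) (h : ℂ → ℂ) (hc : Continuous h) (hlp : LimitPeriodicX h)
    (hdec : ∀ z : ℂ, f (nuC z) = nuC ((q : ℂ) * z + h z)) :
    (∃ g : CSolQ → ℂ, Continuous g ∧ ∀ x : CSolQ, f x = nuC (g x)) ↔ q = 0 := by
  constructor
  · -- forward: a factorization forces degree zero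
    rintro ⟨g, hg, hfg⟩
    by_contra hq
    have hgz : ∀ z : ℂ, g (nuC z) = (q : ℂ) * z + h z := by
      intro z
      apply S12.nuC_injective
      rw [← hfg (nuC z), hdec z]
    set w : ℕ → ℂ := fun j => 2 * π * (((j.factorial : ℤ) : ℂ)) with hw
    have htend : Filter.Tendsto (fun j => nuC (w j)) Filter.atTop (nhds (nuC 0)) := by
      refine tendsto_subtype_rng.mpr ?_
      rw [tendsto_pi_nhds]
      intro n
      apply Filter.Tendsto.congr' (f₁ := fun _ => (nuC 0).1 n) _ tendsto_const_nhds
      filter_upwards [Filter.eventually_ge_atTop ((n : ℕ+) : ℕ)] with j hj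
      have hdvd : ((n : ℕ+) : ℕ) ∣ j.factorial := Nat.dvd_factorial n.pos hj
      obtain ⟨t, ht⟩ := hdvd
      show Complex.exp (Complex.I * 0 / (((n : ℕ+) : ℕ) : ℂ))
        = Complex.exp (Complex.I * w j / (((n : ℕ+) : ℕ) : ℂ))
      have hn : ((((n : ℕ+) : ℕ)) : ℂ) ≠ 0 := by exact_mod_cast n.ne_zero
      have harg : Complex.I * w j / (((n : ℕ+) : ℕ) : ℂ) = (t : ℂ) * (2 * (π:ℂ) * Complex.I) := by
        rw [hw]
        push_cast [ht]
        field_simp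
      rw [harg]
      have h1 : Complex.exp ((t:ℤ) * (2 * (π:ℂ) * Complex.I)) = 1 :=
        Complex.exp_int_mul_two_pi_mul_I t
      push_cast at h1
      rw [h1]
      simp
    have hgt : Filter.Tendsto (fun j => g (nuC (w j))) Filter.atTop (nhds (g (nuC 0))) :=
      (hg.tendsto _).comp htend
    have hg0 : g (nuC 0) = h 0 := by rw [hgz 0]; simp
    obtain ⟨N, hN⟩ := hlp 1 one_pos {(0:ℝ)} isCompact_singleton
    have hev1 : ∀ᶠ j in Filter.atTop, dist (g (nuC (w j))) (g (nuC 0)) < 1 :=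
      hgt.eventually (Metric.eventually_nhds_iff_ball.mpr
        ⟨1, one_pos, fun y hy => by simpa [dist_comm] using hy⟩)
    obtain ⟨J, hJ⟩ := Filter.eventually_atTop.mp hev1
    have hqpos : (0:ℝ) < |(q:ℝ)| := abs_pos.mpr (by exact_mod_cast hq)
    set M : ℕ := ⌈2 / (2 * π * |(q:ℝ)|)⌉₊ + 1 with hM
    set j : ℕ := J + ((N : ℕ+) : ℕ) + M with hj
    have hjJ : J ≤ j := by omega
    have hjN : ((N : ℕ+) : ℕ) ≤ j := by omega
    have hjM : M ≤ j := by omega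
    have hd1 : dist (g (nuC (w j))) (g (nuC 0)) < 1 := hJ j hjJ
    have hdvdN : ((N : ℕ+) : ℤ) ∣ (j.factorial : ℤ) := by
      exact_mod_cast Int.natCast_dvd_natCast.mpr (Nat.dvd_factorial N.pos hjN)
    have hd2 : ‖h (w j) - h 0‖ < 1 := by
      have := hN 0 (by simp) (j.factorial : ℤ) hdvdN
      rw [zero_add] at this
      exact this
    have hwr : (q : ℂ) * w j = (((q:ℝ) * (2 * π * (j.factorial : ℝ)) : ℝ) : ℂ) := by
      rw [hw]
      push_cast
      ring
    have hnorm : ‖(q:ℂ) * w j‖ = |(q:ℝ)| * (2 * π * (j.factorial : ℝ)) := by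
      rw [hwr, Complex.norm_real, Real.norm_eq_abs, abs_mul]
      congr 1
      exact abs_of_nonneg (by positivity)
    have hfac : (M : ℝ) ≤ (j.factorial : ℝ) := by
      exact_mod_cast le_trans hjM (Nat.self_le_factorial j)
    have hMgt : 2 / (2 * π * |(q:ℝ)|) < (M : ℝ) := by
      rw [hM]
      push_cast
      have := Nat.le_ceil (2 / (2 * π * |(q:ℝ)|))
      linarith
    have hbig : 2 < ‖(q:ℂ) * w j‖ := by
      rw [hnorm]
      have hpos : (0:ℝ) < 2 * π * |(q:ℝ)| := by positivity
      rw [div_lt_iff₀ hpos] at hMgt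
      nlinarith [Real.pi_pos]
    have htri : ‖(q:ℂ) * w j‖ ≤ dist (g (nuC (w j))) (g (nuC 0)) + ‖h (w j) - h 0‖ := by
      rw [dist_eq_norm, hgz (w j), hg0]
      have : (q:ℂ) * w j = ((q:ℂ) * w j + h (w j) - h 0) - (h (w j) - h 0) := by ring
      calc ‖(q:ℂ) * w j‖ = ‖((q:ℂ) * w j + h (w j) - h 0) - (h (w j) - h 0)‖ := by rw [← this]
        _ ≤ ‖(q:ℂ) * w j + h (w j) - h 0‖ + ‖h (w j) - h 0‖ := norm_sub_le _ _
    linarith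
  · -- reverse: degree zero gives a factorization
    intro hq
    subst hq
    have hdec0 : ∀ z : ℂ, f (nuC z) = nuC (h z) := by
      intro z
      have := hdec z
      simpa using this
    refine ⟨fun x => S12.Hext h (S12.Ac 1 x) (S12.Zc 1 x), ?_, ?_⟩
    · rw [continuous_iff_continuousAt]
      intro x0
      obtain ⟨n, hslit⟩ := S12.exists_slit x0
      have hgeq : (fun x => S12.Hext h (S12.Ac 1 x) (S12.Zc 1 x))
          = fun x => S12.Hext h (S12.Ac n x) (S12.Zc n x) :=
        funext fun x => S12.Hext_coord_indep f hf h hlp hdec0 1 n x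
      rw [hgeq]
      exact S12.continuousAt_Hext_comp h hc hlp n x0 hslit
    · intro x
      conv_lhs => rw [← S12.expC_Ac_Zc 1 x]
      exact S12.f_expC f hf h hlp hdec0 (S12.Ac 1 x) (S12.Zc 1 x)

end
end

section
/- Every continuous function f : Ĉ_ℚ → ℂ on the adelic Riemann sphere that is leafwise holomorphic on ℂ*_ℚ (i.e., for every a ∈ ẑ the map z ↦ f(exp(a, z)) is an entire function ℂ → ℂ) is constant; that is, the ring of holomorphic functions on Ĉ_ℚ is exactly the constants ℂ. -/
open Complex Real Filter MeasureTheory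

noncomputable section

/-! ### Auxiliary material for Statement 14 -/

open scoped Topology

lemma spherePow_cont (k : ℕ) (hk : k ≠ 0) : Continuous (spherePow k) := by
  have h : Tendsto (fun z : ℂ => z ^ k) (Filter.coclosedCompact ℂ)
      (Filter.coclosedCompact ℂ) := by
    rw [Filter.coclosedCompact_eq_cocompact, ← Metric.cobounded_eq_cocompact,
      ← tendsto_norm_atTop_iff_cobounded]
    have := (tendsto_pow_atTop hk).comp (tendsto_norm_cobounded_atTop (E := ℂ))
    simpa [Function.comp_def] using this
  exact OnePoint.continuous_map (continuous_pow k) h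

lemma sphereSet_closed : IsClosed {z : ℕ+ → OnePoint ℂ |
    ∀ (n k : ℕ+), spherePow ((k : ℕ+) : ℕ) (z (n * k)) = z n} := by
  have hset : {z : ℕ+ → OnePoint ℂ | ∀ (n k : ℕ+), spherePow ((k : ℕ+) : ℕ) (z (n * k)) = z n}
      = ⋂ (n : ℕ+), ⋂ (k : ℕ+), {z | spherePow ((k : ℕ+) : ℕ) (z (n * k)) = z n} := by
    ext z; simp [Set.mem_iInter]
  rw [hset]
  exact isClosed_iInter fun n => isClosed_iInter fun k =>
    isClosed_eq ((spherePow_cont _ k.ne_zero).comp (continuous_apply _)) (continuous_apply _)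

instance : CompactSpace SphereQ :=
  isCompact_iff_compactSpace.mp sphereSet_closed.isCompact

/-- The point `0` of the adelic Riemann sphere. -/
def zeroSph : SphereQ :=
  ⟨fun _ => OnePoint.some (0 : ℂ), fun n k => by
    show OnePoint.some ((0 : ℂ) ^ ((k : ℕ+) : ℕ)) = OnePoint.some (0 : ℂ)
    rw [zero_pow k.ne_zero]⟩

/-- The point `∞` of the adelic Riemann sphere. -/
def inftySph : SphereQ := ⟨fun _ => OnePoint.infty, fun _ _ => rfl⟩

lemma exp_vert (n : ℕ+) (t : ℝ) :
    Complex.exp (Complex.I * ((t : ℂ) * Complex.I) / (((n : ℕ+) : ℕ) : ℂ))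
      = ((Real.exp (-t / ((n : ℕ+) : ℕ)) : ℝ) : ℂ) := by
  rw [Complex.ofReal_exp]
  congr 1
  rw [show Complex.I * ((t : ℂ) * Complex.I) = -(t : ℂ) by
    rw [mul_comm Complex.I, mul_assoc, Complex.I_mul_I, mul_neg_one]]
  push_cast
  ring

lemma tendsto_expSph_atTop (a : Zhat) :
    Tendsto (fun t : ℝ => expSph a ((t : ℂ) * Complex.I)) atTop (𝓝 zeroSph) := by
  apply tendsto_subtype_rng.mpr
  rw [tendsto_pi_nhds]
  intro n
  show Tendsto (fun t : ℝ => OnePoint.some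
      (phiComp a n * Complex.exp (Complex.I * ((t : ℂ) * Complex.I) / (((n : ℕ+) : ℕ) : ℂ))))
    atTop (𝓝 (OnePoint.some (0 : ℂ)))
  have h1 : Tendsto (fun t : ℝ =>
      phiComp a n * Complex.exp (Complex.I * ((t : ℂ) * Complex.I) / (((n : ℕ+) : ℕ) : ℂ)))
      atTop (𝓝 0) := by
    have h2 : Tendsto (fun t : ℝ => Real.exp (-t / ((n : ℕ+) : ℕ))) atTop (𝓝 0) := by
      apply Real.tendsto_exp_atBot.comp
      apply Tendsto.atBot_div_const (by exact_mod_cast n.pos)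
      exact tendsto_neg_atTop_atBot
    have h3 : Tendsto (fun t : ℝ =>
        Complex.exp (Complex.I * ((t : ℂ) * Complex.I) / (((n : ℕ+) : ℕ) : ℂ))) atTop (𝓝 0) := by
      simp only [exp_vert]
      exact_mod_cast (Complex.continuous_ofReal.tendsto 0).comp h2
    simpa using h3.const_mul (phiComp a n)
  exact (OnePoint.continuous_coe.tendsto 0).comp h1

lemma tendsto_expSph_atBot (a : Zhat) :
    Tendsto (fun t : ℝ => expSph a ((t : ℂ) * Complex.I)) atBot (𝓝 inftySph) := by
  apply tendsto_subtype_rng.mpr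
  rw [tendsto_pi_nhds]
  intro n
  show Tendsto (fun t : ℝ => OnePoint.some
      (phiComp a n * Complex.exp (Complex.I * ((t : ℂ) * Complex.I) / (((n : ℕ+) : ℕ) : ℂ))))
    atBot (𝓝 OnePoint.infty)
  have key : Tendsto (fun t : ℝ =>
      phiComp a n * Complex.exp (Complex.I * ((t : ℂ) * Complex.I) / (((n : ℕ+) : ℕ) : ℂ)))
      atBot (Filter.comap ((↑) : ℂ → OnePoint ℂ) (𝓝 OnePoint.infty)) := by
    rw [OnePoint.comap_coe_nhds_infty, Filter.coclosedCompact_eq_cocompact,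
      ← Metric.cobounded_eq_cocompact, ← tendsto_norm_atTop_iff_cobounded]
    have h2 : Tendsto (fun t : ℝ => Real.exp (-t / ((n : ℕ+) : ℕ))) atBot atTop := by
      apply Real.tendsto_exp_atTop.comp
      apply Tendsto.atTop_div_const (by exact_mod_cast n.pos)
      exact tendsto_neg_atBot_atTop
    have hnorm : ∀ t : ℝ, ‖phiComp a n *
        Complex.exp (Complex.I * ((t : ℂ) * Complex.I) / (((n : ℕ+) : ℕ) : ℂ))‖
        = Real.exp (-t / ((n : ℕ+) : ℕ)) := by
      intro t
      rw [norm_mul, show ‖phiComp a n‖ = 1 from exp_real_mul_I_norm _, one_mul, exp_vert, Complex.norm_real,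
        Real.norm_eq_abs, abs_of_pos (Real.exp_pos _)]
    simpa only [hnorm] using h2
  exact tendsto_comap_iff.mp key

lemma exp_two_pi_pow (m : ℕ) (c : ℕ) :
    Complex.exp (2 * (π : ℂ) * Complex.I / (m : ℂ)) ^ c
      = Complex.exp (((2 * π * c / m : ℝ) : ℂ) * Complex.I) := by
  rw [← Complex.exp_nat_mul]
  congr 1
  push_cast
  ring

lemma exp_natCast_congr_rev (n : ℕ+) (A B : ℕ)
    (h : Complex.exp (((2 * π * A / ((n : ℕ+) : ℕ) : ℝ) : ℂ) * Complex.I)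
      = Complex.exp (((2 * π * B / ((n : ℕ+) : ℕ) : ℝ) : ℂ) * Complex.I)) :
    (A : ZMod ((n : ℕ+) : ℕ)) = (B : ZMod ((n : ℕ+) : ℕ)) := by
  obtain ⟨m, hm⟩ := Complex.exp_eq_exp_iff_exists_int.mp h
  have hn : (((n : ℕ+) : ℕ) : ℝ) ≠ 0 := by exact_mod_cast n.ne_zero
  have hm' : ((2 * π * A / ((n : ℕ+) : ℕ) : ℝ) : ℂ)
      = ((2 * π * B / ((n : ℕ+) : ℕ) : ℝ) : ℂ) + (m : ℂ) * (2 * (π : ℂ)) := by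
    apply mul_right_cancel₀ Complex.I_ne_zero
    rw [hm]; ring
  have hr : (2 * π * A / ((n : ℕ+) : ℕ) : ℝ)
      = 2 * π * B / ((n : ℕ+) : ℕ) + (m : ℝ) * (2 * π) := by exact_mod_cast hm'
  have key : (A : ℝ) / ((n : ℕ+) : ℕ) = (B : ℝ) / ((n : ℕ+) : ℕ) + m := by
    have h2 : (2 * π : ℝ) ≠ 0 := by positivity
    apply mul_left_cancel₀ h2
    calc (2 * π) * ((A : ℝ) / ((n : ℕ+) : ℕ)) = 2 * π * A / ((n : ℕ+) : ℕ) := by ring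
      _ = 2 * π * B / ((n : ℕ+) : ℕ) + (m : ℝ) * (2 * π) := hr
      _ = (2 * π) * ((B : ℝ) / ((n : ℕ+) : ℕ) + m) := by ring
  have hA : (A : ℝ) = B + m * ((n : ℕ+) : ℕ) := by
    have h3 := congrArg (fun x : ℝ => x * ((n : ℕ+) : ℕ)) key
    simp only [add_mul, div_mul_cancel₀ _ hn] at h3
    exact h3
  have hAZ : (A : ℤ) = B + m * ((n : ℕ+) : ℕ) := by exact_mod_cast hA
  have h4 := congrArg (Int.cast : ℤ → ZMod ((n : ℕ+) : ℕ)) hAZ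
  push_cast at h4
  simpa [ZMod.natCast_self] using h4

lemma exp_Iw_pow (w : ℂ) (n : ℕ+) :
    Complex.exp (Complex.I * w / (((n : ℕ+) : ℕ) : ℂ)) ^ ((n : ℕ+) : ℕ)
      = Complex.exp (Complex.I * w) := by
  have h := exp_div_powC (Complex.I * w) 1 n
  rw [one_mul] at h
  simpa using h

/-- Every continuous function `f : Ĉ_ℚ → ℂ` on the adelic
Riemann sphere that is leafwise holomorphic on `ℂ*_ℚ` is constant: the ring of
holomorphic functions on `Ĉ_ℚ` is exactly `ℂ`. -/
theorem statement14 (f : SphereQ → ℂ) (hf : Continuous f)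
    (hol : ∀ a : Zhat, Differentiable ℂ fun z : ℂ => f (expSph a z)) :
    ∃ c : ℂ, ∀ x : SphereQ, f x = c := by
  -- Liouville on each leaf
  have hbdd : Bornology.IsBounded (Set.range f) :=
    (isCompact_range hf).isBounded
  have hleaf : ∀ (a : Zhat) (z w : ℂ), f (expSph a z) = f (expSph a w) := by
    intro a z w
    exact (hol a).apply_eq_apply_of_bounded
      (hbdd.subset (Set.range_comp_subset_range _ f)) z w
  -- value on each leaf equals `f zeroSph`
  have hval : ∀ (a : Zhat) (z : ℂ), f (expSph a z) = f zeroSph := by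
    intro a z
    have hT : Tendsto (fun t : ℝ => f (expSph a ((t : ℂ) * Complex.I))) atTop
        (𝓝 (f zeroSph)) := (hf.tendsto _).comp (tendsto_expSph_atTop a)
    have hconst : (fun t : ℝ => f (expSph a ((t : ℂ) * Complex.I)))
        = fun _ : ℝ => f (expSph a z) := funext fun t => hleaf a _ z
    rw [hconst] at hT
    exact tendsto_nhds_unique tendsto_const_nhds hT
  have hinfty : f inftySph = f zeroSph := by
    have hT : Tendsto (fun t : ℝ => f (expSph (0 : Zhat) ((t : ℂ) * Complex.I))) atBot
        (𝓝 (f inftySph)) := (hf.tendsto _).comp (tendsto_expSph_atBot (0 : Zhat))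
    have hconst : (fun t : ℝ => f (expSph (0 : Zhat) ((t : ℂ) * Complex.I)))
        = fun _ : ℝ => f (expSph (0 : Zhat) 0) := funext fun t => hleaf (0 : Zhat) _ 0
    rw [hconst] at hT
    have := tendsto_nhds_unique tendsto_const_nhds hT
    rw [← this, hval (0 : Zhat) 0]
  refine ⟨f zeroSph, fun x => ?_⟩
  -- three cases according to `x.1 1`
  rcases hx1 : x.1 1 with _ | w0
  · -- `x = ∞`
    have hall : ∀ k : ℕ+, x.1 k = OnePoint.infty := by
      intro k
      have h := x.2 1 k
      rw [one_mul, hx1] at h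
      exact Option.map_eq_none_iff.mp h
    have hxx : x = inftySph := Subtype.ext (funext fun k => hall k)
    rw [hxx, hinfty]
  · -- `x.1 1 = some w0`
    have hz : ∀ k : ℕ+, ∃ zk : ℂ, x.1 k = OnePoint.some zk ∧ zk ^ ((k : ℕ+) : ℕ) = w0 := by
      intro k
      have h := x.2 1 k
      rw [one_mul, hx1] at h
      obtain ⟨zk, hzk, hpow⟩ := Option.map_eq_some_iff.mp h
      exact ⟨zk, hzk, hpow⟩
    choose z hzs hzp using hz
    by_cases hw0 : w0 = 0
    · -- `x = 0`
      have hall : ∀ k : ℕ+, x.1 k = OnePoint.some (0 : ℂ) := by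
        intro k
        rw [hzs k]
        congr 1
        have := hzp k
        rw [hw0] at this
        exact pow_eq_zero_iff k.ne_zero |>.mp this
      have hxx : x = zeroSph := Subtype.ext (funext fun k => hall k)
      rw [hxx]
    · -- `x` lies on a leaf: construct `a : ẑ` and `w : ℂ` with `expSph a w = x`
      have hzne : ∀ k : ℕ+, z k ≠ 0 := by
        intro k h0
        apply hw0
        rw [← hzp k, h0, zero_pow k.ne_zero]
      set w : ℂ := -(Complex.I * Complex.log w0) with hwdef
      have hIw : Complex.I * w = Complex.log w0 := by
        rw [hwdef, mul_neg, ← mul_assoc, Complex.I_mul_I, neg_one_mul, neg_neg]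
      have hexpw : Complex.exp (Complex.I * w) = w0 := by
        rw [hIw, Complex.exp_log hw0]
      set r : ℕ+ → ℂ := fun n => z n / Complex.exp (Complex.I * w / (((n : ℕ+) : ℕ) : ℂ))
        with hrdef
      have hrel : ∀ n k : ℕ+, z (n * k) ^ ((k : ℕ+) : ℕ) = z n := by
        intro n k
        have h := x.2 n k
        rw [hzs, hzs] at h
        exact Option.some_injective ℂ h
      have hrpow : ∀ n : ℕ+, r n ^ ((n : ℕ+) : ℕ) = 1 := by
        intro n
        rw [hrdef]
        simp only
        rw [div_pow, exp_Iw_pow, hexpw]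
        have h1k := hrel 1 n
        rw [one_mul] at h1k
        have : z n ^ ((n : ℕ+) : ℕ) = w0 := hzp n
        rw [this, div_self hw0]
      have hrrel : ∀ n k : ℕ+, r (n * k) ^ ((k : ℕ+) : ℕ) = r n := by
        intro n k
        rw [hrdef]
        simp only
        rw [div_pow, hrel n k, exp_div_powC]
      have hc : ∀ n : ℕ+, ∃ c : ℕ,
          Complex.exp (((2 * π * c / ((n : ℕ+) : ℕ) : ℝ) : ℂ) * Complex.I) = r n := by
        intro n
        haveI : NeZero ((n : ℕ+) : ℕ) := ⟨n.ne_zero⟩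
        obtain ⟨i, _, hip⟩ :=
          (Complex.isPrimitiveRoot_exp ((n : ℕ+) : ℕ) n.ne_zero).eq_pow_of_pow_eq_one (hrpow n)
        exact ⟨i, by rw [← hip, exp_two_pi_pow]⟩
      choose c hcr using hc
      have hcompat : ∀ n k : ℕ+,
          Complex.exp (((2 * π * (c (n * k)) / ((n : ℕ+) : ℕ) : ℝ) : ℂ) * Complex.I)
            = Complex.exp (((2 * π * (c n) / ((n : ℕ+) : ℕ) : ℝ) : ℂ) * Complex.I) := by
        intro n k
        calc Complex.exp (((2 * π * (c (n * k)) / ((n : ℕ+) : ℕ) : ℝ) : ℂ) * Complex.I)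
            = Complex.exp (((2 * π * (c (n * k)) / (((n * k : ℕ+) : ℕ)) : ℝ) : ℂ)
                * Complex.I) ^ ((k : ℕ+) : ℕ) := (exp_div_pow _ n k).symm
          _ = r (n * k) ^ ((k : ℕ+) : ℕ) := by rw [hcr (n * k)]
          _ = r n := hrrel n k
          _ = _ := (hcr n).symm
      set a : Zhat := ⟨fun n => ((c n : ℕ) : ZMod ((n : ℕ+) : ℕ)), fun n k => by
        rw [ZMod.castHom_apply, ZMod.cast_natCast
          (show ((n : ℕ+) : ℕ) ∣ ((n * k : ℕ+) : ℕ) by rw [PNat.mul_coe]; exact dvd_mul_right _ _)]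
        exact exp_natCast_congr_rev n _ _ (hcompat n k)⟩ with hadef
      have hphi : ∀ n : ℕ+, phiComp a n = r n := by
        intro n
        haveI : NeZero ((n : ℕ+) : ℕ) := ⟨n.ne_zero⟩
        have hvc : (((a.1 n).val : ℕ) : ZMod ((n : ℕ+) : ℕ)) = ((c n : ℕ) : ZMod ((n : ℕ+) : ℕ)) := by
          rw [ZMod.natCast_val, ZMod.cast_id]
        unfold phiComp
        rw [exp_natCast_congr n _ _ hvc, hcr n]
      have hxx : expSph a w = x := by
        apply Subtype.ext
        funext n
        show OnePoint.some (phiComp a n * Complex.exp (Complex.I * w / (((n : ℕ+) : ℕ) : ℂ)))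
          = x.1 n
        rw [hphi n, hzs n, hrdef]
        congr 1
        exact div_mul_cancel₀ _ (Complex.exp_ne_zero _)
      rw [← hxx, hval a w]

end
end

section
/- If f : ℂ*_ℚ → ℂ is continuous, then each I_n(f) is continuous, the family {I_n(f) : n ≥ 1} is equicontinuous, and I_n(f) converges to f uniformly on every compact subset of ℂ*_ℚ along the divisibility net (for every compact C ⊆ ℂ*_ℚ and ε > 0 there is N such that sup_{x∈C} |f(x) − I_n(f)(x)| < ε whenever N ∣ n). -/
open Complex Real Filter MeasureTheory

noncomputable section

/- ===== auxiliary lemmas ===== -/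

instance (n : ℕ) : DiscreteTopology (ZMod n) := ⟨rfl⟩

instance (n : ℕ+) : NeZero ((n : ℕ+) : ℕ) := ⟨n.ne_zero⟩

lemma continuous_zhat_val : Continuous (Subtype.val : Zhat → ((n : ℕ+) → ZMod n)) :=
  continuous_induced_dom

lemma continuous_zhat_comp (n : ℕ+) : Continuous fun a : Zhat => a.1 n :=
  (continuous_apply n).comp continuous_zhat_val

lemma continuous_csolq_val : Continuous (Subtype.val : CSolQ → (ℕ+ → ℂ)) :=
  continuous_induced_dom

instance : CompactSpace Zhat := by
  have hcl : IsClosed {a : (n : ℕ+) → ZMod n |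
      ∀ (n k : ℕ+), ZMod.castHom
        (show ((n : ℕ+) : ℕ) ∣ ((n * k : ℕ+) : ℕ) by
          rw [PNat.mul_coe]; exact dvd_mul_right _ _)
        (ZMod n) (a (n * k)) = a n} := by
    have heq : {a : (n : ℕ+) → ZMod n |
        ∀ (n k : ℕ+), ZMod.castHom
          (show ((n : ℕ+) : ℕ) ∣ ((n * k : ℕ+) : ℕ) by
            rw [PNat.mul_coe]; exact dvd_mul_right _ _)
          (ZMod n) (a (n * k)) = a n} =
        ⋂ (n : ℕ+), ⋂ (k : ℕ+), {a : (n : ℕ+) → ZMod n |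
          ZMod.castHom
          (show ((n : ℕ+) : ℕ) ∣ ((n * k : ℕ+) : ℕ) by
            rw [PNat.mul_coe]; exact dvd_mul_right _ _)
          (ZMod n) (a (n * k)) = a n} := by
      ext a; simp [Set.mem_iInter]
    rw [heq]
    refine isClosed_iInter fun n => isClosed_iInter fun k => isClosed_eq ?_ ?_
    · exact continuous_of_discreteTopology.comp (continuous_apply (n * k))
    · exact continuous_apply n
  exact isCompact_iff_compactSpace.mp hcl.isCompact

instance : BorelSpace Zhat := ⟨rfl⟩

instance : T2Space CSolQ := by
  unfold CSolQ
  infer_instance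

lemma continuous_nsmulZ (c : ℕ) : Continuous (nsmulZ c) := by
  apply Continuous.subtype_mk
  apply continuous_pi
  intro n
  exact continuous_of_discreteTopology.comp (continuous_zhat_comp n)

lemma continuous_phiC : Continuous phiC := by
  apply Continuous.subtype_mk
  apply continuous_pi
  intro n
  show Continuous fun a : Zhat => phiComp a n
  have heq : (fun a : Zhat => phiComp a n) =
      (fun t : ZMod ((n : ℕ+) : ℕ) =>
        Complex.exp (((2 * π * (t.val : ℕ) / ((n : ℕ+) : ℕ) : ℝ) : ℂ) * Complex.I)) ∘
      (fun a : Zhat => a.1 n) := rfl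
  rw [heq]
  exact continuous_of_discreteTopology.comp (continuous_zhat_comp n)

lemma continuous_mulC : Continuous fun p : CSolQ × CSolQ => p.1 * p.2 := by
  apply Continuous.subtype_mk
  apply continuous_pi
  intro n
  show Continuous fun p : CSolQ × CSolQ => p.1.1 n * p.2.1 n
  exact ((continuous_apply n).comp (continuous_csolq_val.comp continuous_fst)).mul
    ((continuous_apply n).comp (continuous_csolq_val.comp continuous_snd))

lemma nsmulZ_mul (c d : ℕ) (a : Zhat) : nsmulZ (c * d) a = nsmulZ c (nsmulZ d a) := by
  apply Subtype.ext; funext n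
  show ((c * d : ℕ) : ZMod ((n : ℕ+) : ℕ)) * a.1 n
      = (c : ZMod ((n : ℕ+) : ℕ)) * ((d : ZMod ((n : ℕ+) : ℕ)) * a.1 n)
  push_cast
  ring

lemma one_mulC (x : CSolQ) : (1 : CSolQ) * x = x := by
  apply Subtype.ext; funext n
  show 1 * x.1 n = x.1 n
  exact one_mul _

lemma phiC_nsmul_apply_self (n : ℕ+) (a : Zhat) :
    (phiC (nsmulZ ((n : ℕ+) : ℕ) a)).1 n = 1 := by
  show phiComp (nsmulZ ((n : ℕ+) : ℕ) a) n = 1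
  unfold phiComp
  have h : (nsmulZ ((n : ℕ+) : ℕ) a).1 n = 0 := by
    show (((n : ℕ+) : ℕ) : ZMod ((n : ℕ+) : ℕ)) * a.1 n = 0
    rw [ZMod.natCast_self, zero_mul]
  rw [h]
  simp

/-- If `f : ℂ*_ℚ → ℂ` is continuous, then each `I_n(f)` is
continuous, the family `{I_n(f)}` is equicontinuous, and `I_n(f) → f` uniformly
on every compact subset along the divisibility net. -/
theorem statement16 (η : Measure Zhat) [IsProbabilityMeasure η]
    (hη : ∀ b : Zhat, ∀ s : Set Zhat, MeasurableSet s → η ((· + b) ⁻¹' s) = η s)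
    (f : CSolQ → ℂ) (hf : Continuous f) :
    (∀ n : ℕ+, Continuous (Iren η n f)) ∧
    Equicontinuous (fun n : ℕ+ => Iren η n f) ∧
    (∀ C : Set CSolQ, IsCompact C → ∀ ε : ℝ, 0 < ε → ∃ N : ℕ+,
      ∀ n : ℕ+, ((N : ℕ+) : ℕ) ∣ ((n : ℕ+) : ℕ) →
        ∀ x ∈ C, ‖f x - Iren η n f x‖ < ε) := by
  classical
  -- integrability of the integrand
  have hcontint : ∀ (n : ℕ+) (x : CSolQ),
      Continuous fun a : Zhat => f (phiC (nsmulZ ((n : ℕ+) : ℕ) a) * x) := by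
    intro n x
    exact hf.comp (continuous_mulC.comp
      ((continuous_phiC.comp (continuous_nsmulZ _)).prodMk continuous_const))
  have hint : ∀ (n : ℕ+) (x : CSolQ),
      Integrable (fun a : Zhat => f (phiC (nsmulZ ((n : ℕ+) : ℕ) a) * x)) η :=
    fun n x => (hcontint n x).integrable_of_hasCompactSupport
      (HasCompactSupport.of_compactSpace _)
  -- the translation sets
  set Φ : ℕ+ → Set CSolQ :=
    fun n => Set.range fun a : Zhat => phiC (nsmulZ ((n : ℕ+) : ℕ) a) with hΦdef
  have hΦcomp : ∀ n, IsCompact (Φ n) :=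
    fun n => isCompact_range (continuous_phiC.comp (continuous_nsmulZ _))
  have hΦmono : ∀ N n : ℕ+, ((N : ℕ+) : ℕ) ∣ ((n : ℕ+) : ℕ) → Φ n ⊆ Φ N := by
    intro N n hd
    obtain ⟨k, hk⟩ := hd
    rintro _ ⟨a, rfl⟩
    refine ⟨nsmulZ k a, ?_⟩
    show phiC (nsmulZ ((N : ℕ+) : ℕ) (nsmulZ k a)) = phiC (nsmulZ ((n : ℕ+) : ℕ) a)
    rw [← nsmulZ_mul, ← hk]
  have hΦone : ∀ (n : ℕ+), ∀ g ∈ Φ n, g.1 n = 1 := by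
    rintro n _ ⟨a, rfl⟩
    exact phiC_nsmul_apply_self n a
  -- equicontinuity core estimate
  have key : ∀ x₀ : CSolQ, ∀ ε : ℝ, 0 < ε →
      ∀ᶠ x in nhds x₀, ∀ n : ℕ+, dist (Iren η n f x₀) (Iren η n f x) < ε := by
    intro x₀ ε hε
    have hVopen : IsOpen {p : CSolQ × CSolQ | ‖f (p.1 * p.2) - f (p.1 * x₀)‖ < ε / 2} := by
      have c1 : Continuous fun p : CSolQ × CSolQ => f (p.1 * p.2) := hf.comp continuous_mulC
      have c2 : Continuous fun p : CSolQ × CSolQ => f (p.1 * x₀) :=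
        hf.comp (continuous_mulC.comp (continuous_fst.prodMk continuous_const))
      exact isOpen_lt (c1.sub c2).norm continuous_const
    have hsub : (Φ 1) ×ˢ ({x₀} : Set CSolQ) ⊆
        {p : CSolQ × CSolQ | ‖f (p.1 * p.2) - f (p.1 * x₀)‖ < ε / 2} := by
      rintro ⟨g, x⟩ ⟨-, hx⟩
      rcases hx with rfl
      simp only [Set.mem_setOf_eq, sub_self, norm_zero]
      linarith
    obtain ⟨u, v, hu, hv, hΦu, hx₀v, huv⟩ :=
      generalized_tube_lemma (hΦcomp 1) isCompact_singleton hVopen hsub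
    filter_upwards [hv.mem_nhds (hx₀v rfl)] with x hx n
    have hbound : ∀ a : Zhat,
        ‖f (phiC (nsmulZ ((n : ℕ+) : ℕ) a) * x₀) - f (phiC (nsmulZ ((n : ℕ+) : ℕ) a) * x)‖
          ≤ ε / 2 := by
      intro a
      have hg : phiC (nsmulZ ((n : ℕ+) : ℕ) a) ∈ Φ 1 :=
        hΦmono 1 n (one_dvd _) ⟨a, rfl⟩
      have hmem : (phiC (nsmulZ ((n : ℕ+) : ℕ) a), x) ∈
          {p : CSolQ × CSolQ | ‖f (p.1 * p.2) - f (p.1 * x₀)‖ < ε / 2} :=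
        huv ⟨hΦu hg, hx⟩
      have := hmem
      simp only [Set.mem_setOf_eq] at this
      calc ‖f (phiC (nsmulZ ((n : ℕ+) : ℕ) a) * x₀) - f (phiC (nsmulZ ((n : ℕ+) : ℕ) a) * x)‖
          = ‖f (phiC (nsmulZ ((n : ℕ+) : ℕ) a) * x) - f (phiC (nsmulZ ((n : ℕ+) : ℕ) a) * x₀)‖ :=
            norm_sub_rev _ _
        _ ≤ ε / 2 := le_of_lt this
    have heq : Iren η n f x₀ - Iren η n f x =
        ∫ a : Zhat, (f (phiC (nsmulZ ((n : ℕ+) : ℕ) a) * x₀)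
          - f (phiC (nsmulZ ((n : ℕ+) : ℕ) a) * x)) ∂η :=
      (integral_sub (hint n x₀) (hint n x)).symm
    rw [dist_eq_norm, heq]
    calc ‖∫ a : Zhat, (f (phiC (nsmulZ ((n : ℕ+) : ℕ) a) * x₀)
          - f (phiC (nsmulZ ((n : ℕ+) : ℕ) a) * x)) ∂η‖
        ≤ (ε / 2) * (η Set.univ).toReal :=
          norm_integral_le_of_norm_le_const (Filter.Eventually.of_forall hbound)
      _ = ε / 2 := by simp
      _ < ε := by linarith
  have hequi : Equicontinuous fun n : ℕ+ => Iren η n f := by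
    intro x₀
    rw [Metric.equicontinuousAt_iff_right]
    intro ε hε
    exact key x₀ ε hε
  refine ⟨fun n => hequi.continuous n, hequi, ?_⟩
  -- uniform convergence on compacts
  intro C hC ε hε
  have hVopen : IsOpen {p : CSolQ × CSolQ | ‖f (p.1 * p.2) - f p.2‖ < ε / 2} := by
    have c1 : Continuous fun p : CSolQ × CSolQ => f (p.1 * p.2) := hf.comp continuous_mulC
    have c2 : Continuous fun p : CSolQ × CSolQ => f p.2 := hf.comp continuous_snd
    exact isOpen_lt (c1.sub c2).norm continuous_const
  have hsub : ({(1 : CSolQ)} : Set CSolQ) ×ˢ C ⊆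
      {p : CSolQ × CSolQ | ‖f (p.1 * p.2) - f p.2‖ < ε / 2} := by
    rintro ⟨g, x⟩ ⟨hg, -⟩
    rcases hg with rfl
    simp only [Set.mem_setOf_eq, one_mulC, sub_self, norm_zero]
    linarith
  obtain ⟨u, v, hu, hv, h1u, hCv, huv⟩ :=
    generalized_tube_lemma isCompact_singleton hC hVopen hsub
  have hexN : ∃ N : ℕ+, Φ N ⊆ u := by
    by_contra h
    push_neg at h
    have hne : ∀ N : ℕ+, (Φ N ∩ uᶜ).Nonempty := by
      intro N
      obtain ⟨g, hg, hgu⟩ := Set.not_subset.mp (h N)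
      exact ⟨g, hg, hgu⟩
    have hdir : Directed (fun s t : Set CSolQ => s ⊇ t) (fun N : ℕ+ => Φ N ∩ uᶜ) := by
      intro N M
      refine ⟨N * M, Set.inter_subset_inter_left _ (hΦmono N (N * M) ?_),
        Set.inter_subset_inter_left _ (hΦmono M (N * M) ?_)⟩
      · rw [PNat.mul_coe]; exact dvd_mul_right _ _
      · rw [PNat.mul_coe]; exact dvd_mul_left _ _
    obtain ⟨g, hg⟩ := IsCompact.nonempty_iInter_of_directed_nonempty_isCompact_isClosed
      (fun N : ℕ+ => Φ N ∩ uᶜ) hdir hne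
      (fun N => (hΦcomp N).inter_right hu.isClosed_compl)
      (fun N => ((hΦcomp N).isClosed).inter hu.isClosed_compl)
    have hg1 : g = 1 := by
      apply Subtype.ext; funext m
      exact hΦone m g (Set.mem_iInter.mp hg m).1
    have : g ∈ uᶜ := (Set.mem_iInter.mp hg 1).2
    rw [hg1] at this
    exact this (h1u rfl)
  obtain ⟨N, hNu⟩ := hexN
  refine ⟨N, fun n hdvd x hx => ?_⟩
  have hbound : ∀ a : Zhat, ‖f x - f (phiC (nsmulZ ((n : ℕ+) : ℕ) a) * x)‖ ≤ ε / 2 := by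
    intro a
    have hg : phiC (nsmulZ ((n : ℕ+) : ℕ) a) ∈ Φ N := hΦmono N n hdvd ⟨a, rfl⟩
    have hmem := huv (Set.mk_mem_prod (hNu hg) (hCv hx))
    simp only [Set.mem_setOf_eq] at hmem
    calc ‖f x - f (phiC (nsmulZ ((n : ℕ+) : ℕ) a) * x)‖
        = ‖f (phiC (nsmulZ ((n : ℕ+) : ℕ) a) * x) - f x‖ := norm_sub_rev _ _
      _ ≤ ε / 2 := le_of_lt hmem
  have heq : f x - Iren η n f x =
      ∫ a : Zhat, (f x - f (phiC (nsmulZ ((n : ℕ+) : ℕ) a) * x)) ∂η := by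
    rw [integral_sub (integrable_const _) (hint n x), integral_const]
    simp [Iren]
  rw [heq]
  calc ‖∫ a : Zhat, (f x - f (phiC (nsmulZ ((n : ℕ+) : ℕ) a) * x)) ∂η‖
      ≤ (ε / 2) * (η Set.univ).toReal :=
        norm_integral_le_of_norm_le_const (Filter.Eventually.of_forall hbound)
    _ = ε / 2 := by simp
    _ < ε := by linarith

end
end
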